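/- arXiv:2006.07131 — 2 statements merged into one kernel-verified Lean document; each statement's English description precedes it below -/
import Mathlib

section
/- Let C, C₁, C₂, … be bivariate Extreme Value copulas with Pickands dependence functions A, A₁, A₂, …, respectively, and suppose A_n(x) → A(x) for all x ∈ [0,1]. Then lim_{n→∞} ζ₁(C_n) = ζ₁(C) and lim_{n→∞} r(C_n) = r(C). In other words, within the class of Extreme Value copulas both ζ₁ and r are continuous with respect to pointwise convergence of the Pickands dependence functions. -/
open MeasureTheory Filter Set
open scoped ENNReal

noncomputable section

/-- Right-hand derivative (of a convex function on `[0,1]`) of `f` at `x`, realized as the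
infimum of the forward difference quotients with right endpoint in `(x, 1]`. -/
noncomputable def rightD (f : ℝ → ℝ) (x : ℝ) : ℝ :=
  sInf ((fun y => (f y - f x) / (y - x)) '' Set.Ioc x 1)

/-- `A` is a Pickands dependence function: convex on `[0,1]`, `A 0 = A 1 = 1` and
`max (1−x) x ≤ A x ≤ 1` on `[0,1]`. -/
def IsPickands (A : ℝ → ℝ) : Prop :=
  ConvexOn ℝ (Set.Icc (0:ℝ) 1) A ∧ A 0 = 1 ∧ A 1 = 1 ∧
    ∀ x ∈ Set.Icc (0:ℝ) 1, max (1 - x) x ≤ A x ∧ A x ≤ 1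

/-- The Extreme Value copula induced by the Pickands dependence function `A`:
`C_A(x,y) = (xy)^{A(log x / log(xy))}` for `x,y ∈ (0,1)` and `C_A(x,y) = xy` otherwise. -/
noncomputable def evCopula (A : ℝ → ℝ) (x y : ℝ) : ℝ :=
  if (0 < x ∧ x < 1) ∧ (0 < y ∧ y < 1) then
    (x * y) ^ A (Real.log x / Real.log (x * y))
  else x * y

/-- The set `Cont(D⁺A)` of continuity points of `D⁺A` in `(0,1)`. -/
def ContDA (A : ℝ → ℝ) : Set ℝ :=
  {x | x ∈ Set.Ioo (0:ℝ) 1 ∧ ContinuousAt (rightD A) x}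

/-- The Markov kernel (as conditional distribution function `(x,y) ↦ K_{C_A}(x,[0,y])`) of
the Extreme Value copula induced by `A`. -/
noncomputable def evKernel (A : ℝ → ℝ) (x y : ℝ) : ℝ :=
  if 0 < x ∧ x < 1 then
    if 0 < y ∧ y < 1 then
      evCopula A x y *
        (rightD A (Real.log x / Real.log (x * y)) * Real.log y / (x * Real.log (x * y))
          + A (Real.log x / Real.log (x * y)) / x)
    else y
  else 1

/-- The metric `D₁` between two copulas, expressed via their conditional distribution
functions `K₁, K₂` (with `Kᵢ x y = K_{Cᵢ}(x,[0,y])`). -/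
noncomputable def D1 (K1 K2 : ℝ → ℝ → ℝ) : ℝ :=
  ∫ y in Set.Icc (0:ℝ) 1, ∫ x in Set.Icc (0:ℝ) 1, |K1 x y - K2 x y|

/-- Conditional distribution function of the independence copula `Π`. -/
def piKernel : ℝ → ℝ → ℝ := fun _ y => y

/-- Dependence measure `ζ₁(C) = 3 D₁(C, Π)`. -/
noncomputable def zeta1 (K : ℝ → ℝ → ℝ) : ℝ := 3 * D1 K piKernel

/-- Dependence measure `r(C) = 6 ∫∫ K_C(x,[0,y])² dλ(x) dλ(y) − 2`. -/
noncomputable def rdep (K : ℝ → ℝ → ℝ) : ℝ :=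
  6 * (∫ y in Set.Icc (0:ℝ) 1, ∫ x in Set.Icc (0:ℝ) 1, (K x y) ^ 2) - 2

/-- Weak conditional convergence of a sequence of copulas, in terms of their conditional
distribution functions: for λ-a.e. `x ∈ [0,1]` the measures `K_{C_n}(x,·)` converge weakly
to `K_C(x,·)`, i.e. the conditional distribution functions converge at every continuity
point of `y ↦ K_C(x,[0,y])` in `[0,1]`. -/
def WeakCondConv (Kseq : ℕ → ℝ → ℝ → ℝ) (K : ℝ → ℝ → ℝ) : Prop :=
  ∀ᵐ x ∂(volume.restrict (Set.Icc (0:ℝ) 1)),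
    ∀ y ∈ Set.Icc (0:ℝ) 1, ContinuousWithinAt (fun t => K x t) (Set.Icc 0 1) y →
      Filter.Tendsto (fun n => Kseq n x y) Filter.atTop (nhds (K x y))

namespace Stmt17Aux

variable {A : ℝ → ℝ}

lemma slope_le_one (hA : IsPickands A) {x y : ℝ} (hx : 0 ≤ x) (hxy : x < y) (hy : y ≤ 1) :
    (A y - A x) / (y - x) ≤ 1 := by
  obtain ⟨hc, h0, h1, hb⟩ := hA
  have hxI : x ∈ Set.Icc (0:ℝ) 1 := ⟨hx, le_of_lt (lt_of_lt_of_le hxy hy)⟩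
  have key : ∀ w, 0 ≤ w → w < 1 → (A 1 - A w) / (1 - w) ≤ 1 := by
    intro w hw0 hw1
    have hAw : w ≤ A w := le_trans (le_max_right _ _) (hb w ⟨hw0, hw1.le⟩).1
    rw [h1, div_le_one (by linarith)]
    linarith
  rcases eq_or_lt_of_le hy with rfl | hy1
  · exact key x hx hxy
  · calc (A y - A x) / (y - x) ≤ (A 1 - A y) / (1 - y) :=
        hc.slope_mono_adjacent hxI (by norm_num) hxy hy1
      _ ≤ 1 := key y (hx.trans hxy.le) hy1

lemma neg_one_le_slope (hA : IsPickands A) {x y : ℝ} (hx : 0 ≤ x) (hxy : x < y) (hy : y ≤ 1) :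
    -1 ≤ (A y - A x) / (y - x) := by
  obtain ⟨hc, h0, h1, hb⟩ := hA
  have hyI : y ∈ Set.Icc (0:ℝ) 1 := ⟨(hx.trans hxy.le), hy⟩
  have key : ∀ w, 0 < w → w ≤ 1 → -1 ≤ (A w - A 0) / (w - 0) := by
    intro w hw0 hw1
    have hAw : 1 - w ≤ A w := le_trans (le_max_left _ _) (hb w ⟨hw0.le, hw1⟩).1
    rw [h0, sub_zero, le_div_iff₀ hw0]
    linarith
  rcases eq_or_lt_of_le hx with rfl | hx0
  · simpa using key y hxy hy
  · calc (-1 : ℝ) ≤ (A x - A 0) / (x - 0) := key x hx0 (hxy.le.trans hy)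
      _ ≤ (A y - A x) / (y - x) :=
        hc.slope_mono_adjacent (by norm_num) hyI hx0 hxy

lemma rightD_bddBelow (hA : IsPickands A) {x : ℝ} (hx : 0 ≤ x) :
    BddBelow ((fun y => (A y - A x) / (y - x)) '' Set.Ioc x 1) := by
  refine ⟨-1, ?_⟩
  rintro q ⟨y, hy, rfl⟩
  exact neg_one_le_slope hA hx hy.1 hy.2

lemma rightD_le_slope (hA : IsPickands A) {x y : ℝ} (hx : 0 ≤ x) (hy : y ∈ Set.Ioc x 1) :
    rightD A x ≤ (A y - A x) / (y - x) :=
  csInf_le (rightD_bddBelow hA hx) (Set.mem_image_of_mem _ hy)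

lemma neg_one_le_rightD (hA : IsPickands A) {x : ℝ} (hx0 : 0 ≤ x) (hx1 : x < 1) :
    -1 ≤ rightD A x := by
  refine le_csInf ⟨_, Set.mem_image_of_mem _ (show (1:ℝ) ∈ Set.Ioc x 1 from ⟨hx1, le_refl _⟩)⟩ ?_
  rintro q ⟨y, hy, rfl⟩
  exact neg_one_le_slope hA hx0 hy.1 hy.2

lemma slope_le_rightD (hA : IsPickands A) {w x : ℝ} (hw : 0 ≤ w) (hwx : w < x) (hx1 : x < 1) :
    (A x - A w) / (x - w) ≤ rightD A x := by
  refine le_csInf ⟨_, Set.mem_image_of_mem _ (show (1:ℝ) ∈ Set.Ioc x 1 from ⟨hx1, le_refl _⟩)⟩ ?_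
  rintro q ⟨y, hy, rfl⟩
  exact hA.1.slope_mono_adjacent ⟨hw, (hwx.trans hx1).le⟩ ⟨(hw.trans (hwx.le.trans hy.1.le)), hy.2⟩ hwx hy.1

lemma bracket_mem (hA : IsPickands A) {z : ℝ} (hz : z ∈ Set.Ioo (0:ℝ) 1) :
    A z + (1 - z) * rightD A z ∈ Set.Icc (0:ℝ) 1 := by
  obtain ⟨hz0, hz1⟩ := hz
  have h1z : (0:ℝ) < 1 - z := by linarith
  have hub : rightD A z ≤ (A 1 - A z) / (1 - z) :=
    rightD_le_slope hA hz0.le ⟨hz1, le_refl _⟩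
  have hlb : -1 ≤ rightD A z := neg_one_le_rightD hA hz0.le hz1
  have hAz1 : 1 - z ≤ A z := le_trans (le_max_left _ _) (hA.2.2.2 z ⟨hz0.le, hz1.le⟩).1
  have hA1 : A 1 = 1 := hA.2.2.1
  constructor
  · nlinarith
  · have := (mul_le_mul_of_nonneg_left hub h1z.le)
    rw [mul_div_cancel₀ _ (ne_of_gt h1z)] at this
    linarith

lemma lipschitz_icc (hA : IsPickands A) {x y : ℝ} (hx : x ∈ Set.Icc (0:ℝ) 1)
    (hy : y ∈ Set.Icc (0:ℝ) 1) : |A y - A x| ≤ |y - x| := by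
  rcases lt_trichotomy x y with h | h | h
  · have h1 := slope_le_one hA hx.1 h hy.2
    have h2 := neg_one_le_slope hA hx.1 h hy.2
    have hpos : (0:ℝ) < y - x := by linarith
    rw [abs_le, abs_of_pos hpos]
    rw [div_le_one hpos, le_div_iff₀ hpos] at *
    constructor <;> nlinarith
  · simp [h]
  · have h1 := slope_le_one hA hy.1 h hx.2
    have h2 := neg_one_le_slope hA hy.1 h hx.2
    have hpos : (0:ℝ) < x - y := by linarith
    rw [abs_le, abs_sub_comm, abs_of_pos hpos]
    rw [div_le_one hpos, le_div_iff₀ hpos] at *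
    constructor <;> nlinarith

end Stmt17Aux

namespace Stmt17Aux

variable {A : ℝ → ℝ}

/-- monotone global extension of `rightD A`. -/
noncomputable def Fd (A : ℝ → ℝ) (t : ℝ) : ℝ := if t < 1 then rightD A (max t 0) else 1

lemma Fd_eq (hA : IsPickands A) {t : ℝ} (ht0 : 0 ≤ t) (ht1 : t < 1) : Fd A t = rightD A t := by
  rw [Fd, if_pos ht1, max_eq_left ht0]

lemma rightD_le_one (hA : IsPickands A) {t : ℝ} (ht0 : 0 ≤ t) (ht1 : t < 1) :
    rightD A t ≤ 1 :=
  (rightD_le_slope hA ht0 ⟨ht1, le_refl _⟩).trans (slope_le_one hA ht0 ht1 le_rfl)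

lemma Fd_mono (hA : IsPickands A) : Monotone (Fd A) := by
  intro s t hst
  unfold Fd
  by_cases hs : s < 1
  · by_cases ht : t < 1
    · rw [if_pos hs, if_pos ht]
      have h0s : (0:ℝ) ≤ max s 0 := le_max_right _ _
      have hs1 : max s 0 < 1 := by rw [max_lt_iff]; exact ⟨hs, one_pos⟩
      have ht1 : max t 0 < 1 := by rw [max_lt_iff]; exact ⟨ht, one_pos⟩
      rcases eq_or_lt_of_le (max_le_max hst (le_refl (0:ℝ))) with h | h
      · rw [h]
      · exact le_trans (rightD_le_slope hA h0s ⟨h, ht1.le⟩)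
          (slope_le_rightD hA h0s h ht1)
    · rw [if_pos hs, if_neg ht]
      exact rightD_le_one hA (le_max_right _ _) (by rw [max_lt_iff]; exact ⟨hs, one_pos⟩)
  · rw [if_neg hs, if_neg (fun h => hs (lt_of_le_of_lt hst h))]
  
end Stmt17Aux

namespace Stmt17Aux

variable {A : ℝ → ℝ}

noncomputable def clamp (t : ℝ) : ℝ := max 0 (min t 1)

lemma clamp_mem (t : ℝ) : clamp t ∈ Set.Icc (0:ℝ) 1 :=
  ⟨le_max_left _ _, max_le (by norm_num) (min_le_right _ _)⟩

lemma clamp_eq {t : ℝ} (h0 : 0 ≤ t) (h1 : t ≤ 1) : clamp t = t := by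
  rw [clamp, min_eq_left h1, max_eq_right h0]

lemma continuous_clamp : Continuous clamp :=
  continuous_const.max ((continuous_id.min continuous_const))

noncomputable def Ac (A : ℝ → ℝ) (t : ℝ) : ℝ := A (clamp t)

lemma continuous_Ac (hA : IsPickands A) : Continuous (Ac A) := by
  have hcont : ContinuousOn A (Set.Icc (0:ℝ) 1) := by
    refine LipschitzOnWith.continuousOn (K := 1) ?_
    rw [lipschitzOnWith_iff_dist_le_mul]
    intro x hx y hy
    rw [Real.dist_eq, Real.dist_eq, NNReal.coe_one, one_mul]
    exact lipschitz_icc hA hy hx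
  exact hcont.comp_continuous continuous_clamp clamp_mem

lemma Ac_eq {t : ℝ} (h0 : 0 ≤ t) (h1 : t ≤ 1) : Ac A t = A t := by rw [Ac, clamp_eq h0 h1]

/-- The argument `z = log x / log (x y)`. -/
lemma z_mem {x y : ℝ} (hx : x ∈ Set.Ioo (0:ℝ) 1) (hy : y ∈ Set.Ioo (0:ℝ) 1) :
    Real.log x / Real.log (x * y) ∈ Set.Ioo (0:ℝ) 1 := by
  have hu : Real.log x < 0 := Real.log_neg hx.1 hx.2
  have hv : Real.log y < 0 := Real.log_neg hy.1 hy.2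
  rw [Real.log_mul (ne_of_gt hx.1) (ne_of_gt hy.1)]
  constructor
  · exact div_pos_of_neg_of_neg hu (by linarith)
  · rw [div_lt_one_of_neg (by linarith)]
    linarith

lemma logxy_neg {x y : ℝ} (hx : x ∈ Set.Ioo (0:ℝ) 1) (hy : y ∈ Set.Ioo (0:ℝ) 1) :
    Real.log (x * y) < 0 :=
  Real.log_neg (mul_pos hx.1 hy.1) (by nlinarith [hx.1, hx.2, hy.1, hy.2])

lemma alg_aux (u v s a d x : ℝ) (hs : s ≠ 0) (hx : 0 < x) (hux : Real.log x = u)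
    (hsv : s = u + v) :
    Real.exp (s * a) * (d * v / (x * s) + a / x) =
      Real.exp (s * (a - u / s)) * (a + (1 - u / s) * d) := by
  have hxe : x = Real.exp u := by rw [← hux, Real.exp_log hx]
  have hv : v = s - u := by linarith
  subst hxe hv
  have h2 : s * (a - u / s) = s * a - u := by field_simp
  rw [h2, Real.exp_sub]
  field_simp
  ring

lemma kernel_formula (A : ℝ → ℝ) {x y : ℝ} (hx : x ∈ Set.Ioo (0:ℝ) 1) (hy : y ∈ Set.Ioo (0:ℝ) 1) :
    evKernel A x y =
      Real.exp (Real.log (x * y) *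
          (A (Real.log x / Real.log (x * y)) - Real.log x / Real.log (x * y))) *
        (A (Real.log x / Real.log (x * y)) +
          (1 - Real.log x / Real.log (x * y)) * rightD A (Real.log x / Real.log (x * y))) := by
  obtain ⟨hx0, hx1⟩ := hx
  obtain ⟨hy0, hy1⟩ := hy
  have hs : Real.log (x * y) < 0 := logxy_neg ⟨hx0, hx1⟩ ⟨hy0, hy1⟩
  rw [evKernel, if_pos ⟨hx0, hx1⟩, if_pos ⟨hy0, hy1⟩, evCopula,
    if_pos ⟨⟨hx0, hx1⟩, ⟨hy0, hy1⟩⟩, Real.rpow_def_of_pos (mul_pos hx0 hy0)]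
  exact alg_aux (Real.log x) (Real.log y) (Real.log (x * y)) _ _ x (ne_of_lt hs) hx0 rfl
    (Real.log_mul (ne_of_gt hx0) (ne_of_gt hy0))
end Stmt17Aux

namespace Stmt17Aux

variable {A : ℝ → ℝ}

lemma kernel_mem (hA : IsPickands A) {x y : ℝ} (hx : x ∈ Set.Icc (0:ℝ) 1)
    (hy : y ∈ Set.Icc (0:ℝ) 1) : evKernel A x y ∈ Set.Icc (0:ℝ) 1 := by
  by_cases hx' : 0 < x ∧ x < 1
  · by_cases hy' : 0 < y ∧ y < 1
    · rw [kernel_formula A ⟨hx'.1, hx'.2⟩ ⟨hy'.1, hy'.2⟩]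
      set z := Real.log x / Real.log (x * y) with hz
      have hzm : z ∈ Set.Ioo (0:ℝ) 1 := z_mem ⟨hx'.1, hx'.2⟩ ⟨hy'.1, hy'.2⟩
      have hbr := bracket_mem hA hzm
      have hzA : z ≤ A z := le_trans (le_max_right _ _)
        (hA.2.2.2 z ⟨hzm.1.le, hzm.2.le⟩).1
      have hs : Real.log (x * y) < 0 := logxy_neg ⟨hx'.1, hx'.2⟩ ⟨hy'.1, hy'.2⟩
      have hexp : Real.exp (Real.log (x * y) * (A z - z)) ≤ 1 := by
        rw [Real.exp_le_one_iff]
        exact mul_nonpos_of_nonpos_of_nonneg hs.le (by linarith)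
      constructor
      · exact mul_nonneg (Real.exp_pos _).le hbr.1
      · exact mul_le_one₀ hexp hbr.1 hbr.2
    · rw [evKernel, if_pos hx', if_neg hy']
      exact hy
  · rw [evKernel, if_neg hx']
    norm_num

/-- measurable global version of the kernel. -/
noncomputable def Kmod (A : ℝ → ℝ) (p : ℝ × ℝ) : ℝ :=
  if 0 < p.1 ∧ p.1 < 1 then
    if 0 < p.2 ∧ p.2 < 1 then
      Real.exp (Real.log (p.1 * p.2) *
          (Ac A (Real.log p.1 / Real.log (p.1 * p.2)) - Real.log p.1 / Real.log (p.1 * p.2))) *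
        (Ac A (Real.log p.1 / Real.log (p.1 * p.2)) +
          (1 - Real.log p.1 / Real.log (p.1 * p.2)) *
            Fd A (Real.log p.1 / Real.log (p.1 * p.2)))
    else p.2
  else 1

lemma Kmod_eq (hA : IsPickands A) (x y : ℝ) : evKernel A x y = Kmod A (x, y) := by
  rw [Kmod]
  by_cases hx' : 0 < x ∧ x < 1
  · by_cases hy' : 0 < y ∧ y < 1
    · rw [if_pos hx', if_pos hy', kernel_formula A ⟨hx'.1, hx'.2⟩ ⟨hy'.1, hy'.2⟩]
      have hzm : Real.log x / Real.log (x * y) ∈ Set.Ioo (0:ℝ) 1 :=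
        z_mem ⟨hx'.1, hx'.2⟩ ⟨hy'.1, hy'.2⟩
      rw [Ac_eq hzm.1.le hzm.2.le, Fd_eq hA hzm.1.le hzm.2]
    · rw [if_pos hx', if_neg hy', evKernel, if_pos hx', if_neg hy']
  · rw [if_neg hx', evKernel, if_neg hx']

lemma Kmod_measurable (hA : IsPickands A) : Measurable (Kmod A) := by
  have hz : Measurable (fun p : ℝ × ℝ => Real.log p.1 / Real.log (p.1 * p.2)) :=
    (Real.measurable_log.comp measurable_fst).div
      (Real.measurable_log.comp (measurable_fst.mul measurable_snd))
  have hAc : Measurable (Ac A) := (continuous_Ac hA).measurable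
  have hFd : Measurable (Fd A) := (Fd_mono hA).measurable
  have h1 : MeasurableSet {p : ℝ × ℝ | 0 < p.1 ∧ p.1 < 1} := by
    have : {p : ℝ × ℝ | 0 < p.1 ∧ p.1 < 1} = Prod.fst ⁻¹' Set.Ioo 0 1 := rfl
    rw [this]; exact measurable_fst measurableSet_Ioo
  have h2 : MeasurableSet {p : ℝ × ℝ | 0 < p.2 ∧ p.2 < 1} := by
    have : {p : ℝ × ℝ | 0 < p.2 ∧ p.2 < 1} = Prod.snd ⁻¹' Set.Ioo 0 1 := rfl
    rw [this]; exact measurable_snd measurableSet_Ioo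
  refine Measurable.ite h1 (Measurable.ite h2 ?_ measurable_snd) measurable_const
  refine Measurable.mul ?_ ?_
  · exact (Real.measurable_exp.comp
      (((Real.measurable_log.comp (measurable_fst.mul measurable_snd))).mul
        ((hAc.comp hz).sub hz)))
  · exact (hAc.comp hz).add (((measurable_const.sub hz)).mul (hFd.comp hz))

end Stmt17Aux

namespace Stmt17Aux

variable {A : ℝ → ℝ} {Aseq : ℕ → ℝ → ℝ}

lemma tendsto_slope (hconv : ∀ x ∈ Set.Icc (0:ℝ) 1,
      Filter.Tendsto (fun n => Aseq n x) Filter.atTop (nhds (A x)))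
    {a b : ℝ} (ha : a ∈ Set.Icc (0:ℝ) 1) (hb : b ∈ Set.Icc (0:ℝ) 1) :
    Filter.Tendsto (fun n => (Aseq n b - Aseq n a) / (b - a)) Filter.atTop
      (nhds ((A b - A a) / (b - a))) :=
  ((hconv b hb).sub (hconv a ha)).div_const _

lemma tendsto_rightD (hA : IsPickands A) (hAseq : ∀ n, IsPickands (Aseq n))
    (hconv : ∀ x ∈ Set.Icc (0:ℝ) 1,
      Filter.Tendsto (fun n => Aseq n x) Filter.atTop (nhds (A x)))
    {z : ℝ} (hz : z ∈ Set.Ioo (0:ℝ) 1) (hc : ContinuousAt (Fd A) z) :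
    Filter.Tendsto (fun n => rightD (Aseq n) z) Filter.atTop (nhds (rightD A z)) := by
  obtain ⟨hz0, hz1⟩ := hz
  rw [tendsto_order]
  constructor
  · -- ∀ a < rightD A z, eventually a < rightD (Aseq n) z
    intro a ha
    -- find w < z with rightD A w > a, using continuity of Fd at z
    rw [Metric.continuousAt_iff] at hc
    obtain ⟨δ, hδ0, hδ⟩ := hc (rightD A z - a) (by linarith)
    set w := z - min (δ / 2) (z / 2) with hw_def
    have hmin0 : 0 < min (δ / 2) (z / 2) := lt_min (by linarith) (by linarith)
    have hw0 : 0 < w := by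
      have : min (δ / 2) (z / 2) ≤ z / 2 := min_le_right _ _
      simp only [hw_def]; linarith
    have hwz : w < z := by simp only [hw_def]; linarith
    have hwd : dist w z < δ := by
      rw [Real.dist_eq, abs_of_nonpos (by simp only [hw_def]; linarith)]
      have : min (δ / 2) (z / 2) ≤ δ / 2 := min_le_left _ _
      simp only [hw_def]; linarith
    have hkey := hδ hwd
    rw [Real.dist_eq, Fd_eq hA hw0.le (hwz.trans hz1), Fd_eq hA hz0.le hz1, abs_lt] at hkey
    have hwa : a < rightD A w := by linarith [hkey.1]
    have hslope : a < (A z - A w) / (z - w) :=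
      lt_of_lt_of_le hwa (rightD_le_slope hA hw0.le ⟨hwz, hz1.le⟩)
    have htend := tendsto_slope (A := A) hconv ⟨hw0.le, (hwz.trans hz1).le⟩ ⟨hz0.le, hz1.le⟩
    have hev : ∀ᶠ n in Filter.atTop, a < (Aseq n z - Aseq n w) / (z - w) :=
      htend.eventually (eventually_gt_nhds hslope)
    refine hev.mono fun n hn => lt_of_lt_of_le hn ?_
    exact slope_le_rightD (hAseq n) hw0.le hwz hz1
  · -- ∀ b > rightD A z, eventually rightD (Aseq n) z < b
    intro b hb
    have hne : ((fun y => (A y - A z) / (y - z)) '' Set.Ioc z 1).Nonempty :=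
      ⟨_, Set.mem_image_of_mem _ (show (1:ℝ) ∈ Set.Ioc z 1 from ⟨hz1, le_refl _⟩)⟩
    obtain ⟨q, hq, hqb⟩ := exists_lt_of_csInf_lt hne hb
    obtain ⟨y, hy, rfl⟩ := hq
    have htend := tendsto_slope (A := A) hconv ⟨hz0.le, hz1.le⟩
      ⟨(hz0.trans hy.1).le, hy.2⟩
    have hev : ∀ᶠ n in Filter.atTop, (Aseq n y - Aseq n z) / (y - z) < b :=
      htend.eventually (eventually_lt_nhds hqb)
    refine hev.mono fun n hn => lt_of_le_of_lt ?_ hn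
    exact rightD_le_slope (hAseq n) hz0.le hy

lemma tendsto_kernel (hA : IsPickands A) (hAseq : ∀ n, IsPickands (Aseq n))
    (hconv : ∀ x ∈ Set.Icc (0:ℝ) 1,
      Filter.Tendsto (fun n => Aseq n x) Filter.atTop (nhds (A x)))
    {x y : ℝ} (hx : x ∈ Set.Ioo (0:ℝ) 1) (hy : y ∈ Set.Ioo (0:ℝ) 1)
    (hc : ContinuousAt (Fd A) (Real.log x / Real.log (x * y))) :
    Filter.Tendsto (fun n => evKernel (Aseq n) x y) Filter.atTop (nhds (evKernel A x y)) := by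
  have hzm := z_mem hx hy
  set z := Real.log x / Real.log (x * y) with hz_def
  have hAz : Filter.Tendsto (fun n => Aseq n z) Filter.atTop (nhds (A z)) :=
    hconv z ⟨hzm.1.le, hzm.2.le⟩
  have hDz : Filter.Tendsto (fun n => rightD (Aseq n) z) Filter.atTop (nhds (rightD A z)) :=
    tendsto_rightD hA hAseq hconv hzm hc
  have h1 : ∀ n, evKernel (Aseq n) x y =
      Real.exp (Real.log (x * y) * (Aseq n z - z)) *
        (Aseq n z + (1 - z) * rightD (Aseq n) z) := fun n => kernel_formula (Aseq n) hx hy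
  rw [kernel_formula A hx hy]
  simp only [h1]
  exact ((Real.continuous_exp.continuousAt.tendsto.comp
      ((hAz.sub_const z).const_mul _)).mul
    (hAz.add ((hDz.const_mul _))))

end Stmt17Aux

namespace Stmt17Aux

variable {A : ℝ → ℝ}

lemma countable_bad (hA : IsPickands A) {y : ℝ} (hy : y ∈ Set.Ioo (0:ℝ) 1) :
    Set.Countable {x | x ∈ Set.Ioo (0:ℝ) 1 ∧
      ¬ContinuousAt (Fd A) (Real.log x / Real.log (x * y))} := by
  have hB : Set.Countable {t | ¬ContinuousAt (Fd A) t} :=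
    (Fd_mono hA).countable_not_continuousAt
  refine Set.MapsTo.countable_of_injOn (f := fun x => Real.log x / Real.log (x * y))
    (fun x hx => hx.2) ?_ hB
  intro x1 hx1 x2 hx2 heq
  have hu1 : Real.log x1 < 0 := Real.log_neg hx1.1.1 hx1.1.2
  have hu2 : Real.log x2 < 0 := Real.log_neg hx2.1.1 hx2.1.2
  have hv : Real.log y < 0 := Real.log_neg hy.1 hy.2
  change Real.log x1 / Real.log (x1 * y) = Real.log x2 / Real.log (x2 * y) at heq
  rw [Real.log_mul (ne_of_gt hx1.1.1) (ne_of_gt hy.1),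
    Real.log_mul (ne_of_gt hx2.1.1) (ne_of_gt hy.1)] at heq
  have hd1 : Real.log x1 + Real.log y ≠ 0 := by linarith
  have hd2 : Real.log x2 + Real.log y ≠ 0 := by linarith
  have hlog : Real.log x1 = Real.log x2 := by
    field_simp at heq
    nlinarith [heq]
  calc x1 = Real.exp (Real.log x1) := (Real.exp_log hx1.1.1).symm
    _ = Real.exp (Real.log x2) := by rw [hlog]
    _ = x2 := Real.exp_log hx2.1.1

lemma master (F : ℕ → ℝ → ℝ → ℝ) (G : ℝ → ℝ → ℝ)
    (measF : ∀ n, Measurable (fun p : ℝ × ℝ => F n p.1 p.2))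
    (bF : ∀ n x y, x ∈ Set.Icc (0:ℝ) 1 → y ∈ Set.Icc (0:ℝ) 1 → |F n x y| ≤ 2)
    (hptconv : ∀ y ∈ Set.Ioo (0:ℝ) 1, ∀ᵐ x ∂(volume.restrict (Set.Icc (0:ℝ) 1)),
      Filter.Tendsto (fun n => F n x y) Filter.atTop (nhds (G x y))) :
    Filter.Tendsto (fun n => ∫ y in Set.Icc (0:ℝ) 1, ∫ x in Set.Icc (0:ℝ) 1, F n x y)
      Filter.atTop (nhds (∫ y in Set.Icc (0:ℝ) 1, ∫ x in Set.Icc (0:ℝ) 1, G x y)) := by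
  set μ := volume.restrict (Set.Icc (0:ℝ) 1) with hμ_def
  haveI : IsFiniteMeasure μ := by
    constructor
    rw [hμ_def, Measure.restrict_apply_univ]
    exact measure_Icc_lt_top
  have hμuniv : (μ Set.univ).toReal = 1 := by
    rw [hμ_def, Measure.restrict_apply_univ, Real.volume_Icc]
    norm_num
  have inner : ∀ y ∈ Set.Ioo (0:ℝ) 1,
      Filter.Tendsto (fun n => ∫ x, F n x y ∂μ) Filter.atTop (nhds (∫ x, G x y ∂μ)) := by
    intro y hy
    refine tendsto_integral_of_dominated_convergence (fun _ => 2) ?_ ?_ ?_ (hptconv y hy)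
    · intro n
      exact ((measF n).comp (measurable_id.prodMk measurable_const)).aestronglyMeasurable
    · exact integrable_const _
    · intro n
      filter_upwards [ae_restrict_mem measurableSet_Icc] with x hx
      rw [Real.norm_eq_abs]
      exact bF n x y hx ⟨hy.1.le, hy.2.le⟩
  have haeIoo : ∀ᵐ y ∂μ, y ∈ Set.Ioo (0:ℝ) 1 := by
    have hnull : μ ({0, 1} : Set ℝ) = 0 := by
      refine le_antisymm (le_trans (Measure.le_iff'.1 Measure.restrict_le_self _) ?_)
        (zero_le)
      exact le_of_eq (((Set.finite_singleton (1:ℝ)).insert 0).measure_zero volume)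
    filter_upwards [ae_restrict_mem measurableSet_Icc,
      (measure_eq_zero_iff_ae_notMem.mp hnull)] with y hy hy01
    simp only [Set.mem_insert_iff, Set.mem_singleton_iff, not_or] at hy01
    exact ⟨lt_of_le_of_ne hy.1 (Ne.symm hy01.1), lt_of_le_of_ne hy.2 hy01.2⟩
  refine tendsto_integral_of_dominated_convergence (fun _ => 2) ?_ ?_ ?_ ?_
  · intro n
    have hsm : StronglyMeasurable (Function.uncurry (F n)) := (measF n).stronglyMeasurable
    exact (hsm.integral_prod_left (μ := μ)).aestronglyMeasurable
  · exact integrable_const _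
  · intro n
    filter_upwards [ae_restrict_mem measurableSet_Icc] with y hyI
    calc ‖∫ x, F n x y ∂μ‖ ≤ 2 * (μ Set.univ).toReal := by
          refine norm_integral_le_of_norm_le_const ?_
          filter_upwards [ae_restrict_mem measurableSet_Icc] with x hx
          rw [Real.norm_eq_abs]
          exact bF n x y hx hyI
      _ = 2 := by rw [hμuniv]; ring
  · filter_upwards [haeIoo] with y hy using inner y hy

end Stmt17Aux

namespace Stmt17Aux

variable {A : ℝ → ℝ} {Aseq : ℕ → ℝ → ℝ}

lemma ae_tendsto_kernel (hA : IsPickands A) (hAseq : ∀ n, IsPickands (Aseq n))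
    (hconv : ∀ x ∈ Set.Icc (0:ℝ) 1,
      Filter.Tendsto (fun n => Aseq n x) Filter.atTop (nhds (A x)))
    {y : ℝ} (hy : y ∈ Set.Ioo (0:ℝ) 1) :
    ∀ᵐ x ∂(volume.restrict (Set.Icc (0:ℝ) 1)),
      Filter.Tendsto (fun n => evKernel (Aseq n) x y) Filter.atTop
        (nhds (evKernel A x y)) := by
  set μ := volume.restrict (Set.Icc (0:ℝ) 1) with hμ_def
  set S := {x | x ∈ Set.Ioo (0:ℝ) 1 ∧
      ¬ContinuousAt (Fd A) (Real.log x / Real.log (x * y))} with hS_def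
  have hSnull : μ S = 0 := by
    refine le_antisymm (le_trans (Measure.le_iff'.1 Measure.restrict_le_self _) ?_) (zero_le)
    exact le_of_eq ((countable_bad hA hy).measure_zero volume)
  have h01null : μ ({0, 1} : Set ℝ) = 0 := by
    refine le_antisymm (le_trans (Measure.le_iff'.1 Measure.restrict_le_self _) ?_) (zero_le)
    exact le_of_eq (((Set.finite_singleton (1:ℝ)).insert 0).measure_zero volume)
  filter_upwards [ae_restrict_mem measurableSet_Icc,
    measure_eq_zero_iff_ae_notMem.mp hSnull, measure_eq_zero_iff_ae_notMem.mp h01null]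
    with x hxI hxS hx01
  simp only [Set.mem_insert_iff, Set.mem_singleton_iff, not_or] at hx01
  have hxIoo : x ∈ Set.Ioo (0:ℝ) 1 :=
    ⟨lt_of_le_of_ne hxI.1 (Ne.symm hx01.1), lt_of_le_of_ne hxI.2 hx01.2⟩
  have hcont : ContinuousAt (Fd A) (Real.log x / Real.log (x * y)) := by
    by_contra h
    exact hxS ⟨hxIoo, h⟩
  exact tendsto_kernel hA hAseq hconv hxIoo hy hcont

end Stmt17Aux

/-- For Extreme Value copulas whose Pickands dependence functions
converge pointwise on `[0,1]`, the dependence measures `ζ₁` and `r` of the copulas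
converge: `ζ₁(C_n) → ζ₁(C)` and `r(C_n) → r(C)`. -/
theorem stmt17 (A : ℝ → ℝ) (Aseq : ℕ → ℝ → ℝ)
    (hA : IsPickands A) (hAseq : ∀ n, IsPickands (Aseq n))
    (hconv : ∀ x ∈ Set.Icc (0:ℝ) 1,
      Filter.Tendsto (fun n => Aseq n x) Filter.atTop (nhds (A x))) :
    Filter.Tendsto (fun n => zeta1 (evKernel (Aseq n))) Filter.atTop
        (nhds (zeta1 (evKernel A))) ∧
      Filter.Tendsto (fun n => rdep (evKernel (Aseq n))) Filter.atTop
        (nhds (rdep (evKernel A))) := by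
  constructor
  · simp only [zeta1, D1, piKernel]
    refine Filter.Tendsto.const_mul 3 ?_
    refine Stmt17Aux.master (fun n x y => |evKernel (Aseq n) x y - y|)
      (fun x y => |evKernel A x y - y|) ?_ ?_ ?_
    · intro n
      have hfe : (fun p : ℝ × ℝ => |evKernel (Aseq n) p.1 p.2 - p.2|)
          = fun p : ℝ × ℝ => |Stmt17Aux.Kmod (Aseq n) p - p.2| :=
        funext fun p => by rw [Stmt17Aux.Kmod_eq (hAseq n)]
      rw [hfe]
      exact ((Stmt17Aux.Kmod_measurable (hAseq n)).sub measurable_snd).abs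
    · intro n x y hx hy
      have hK := Stmt17Aux.kernel_mem (hAseq n) hx hy
      show abs (abs (evKernel (Aseq n) x y - y)) ≤ 2
      rw [abs_abs, abs_le]
      exact ⟨by linarith [hK.1, hy.2], by linarith [hK.2, hy.1]⟩
    · intro y hy
      filter_upwards [Stmt17Aux.ae_tendsto_kernel hA hAseq hconv hy] with x hx
      exact (hx.sub_const y).abs
  · simp only [rdep]
    refine Filter.Tendsto.sub_const ?_ 2
    refine Filter.Tendsto.const_mul 6 ?_
    refine Stmt17Aux.master (fun n x y => (evKernel (Aseq n) x y) ^ 2)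
      (fun x y => (evKernel A x y) ^ 2) ?_ ?_ ?_
    · intro n
      have hfe : (fun p : ℝ × ℝ => (evKernel (Aseq n) p.1 p.2) ^ 2)
          = fun p : ℝ × ℝ => (Stmt17Aux.Kmod (Aseq n) p) ^ 2 :=
        funext fun p => by rw [Stmt17Aux.Kmod_eq (hAseq n)]
      rw [hfe]
      exact (Stmt17Aux.Kmod_measurable (hAseq n)).pow_const 2
    · intro n x y hx hy
      have hK := Stmt17Aux.kernel_mem (hAseq n) hx hy
      show |(evKernel (Aseq n) x y) ^ 2| ≤ 2
      rw [abs_le]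
      constructor
      · nlinarith [hK.1, hK.2]
      · nlinarith [hK.1, hK.2]
    · intro y hy
      filter_upwards [Stmt17Aux.ae_tendsto_kernel hA hAseq hconv hy] with x hx
      exact hx.pow 2
end
end

section
/- Let C, C₁, C₂, … be absolutely continuous bivariate copulas with densities k, k₁, k₂, … (with respect to two-dimensional Lebesgue measure λ₂ on [0,1]²), and suppose k_n → k λ₂-almost everywhere. Then (C_n) converges weakly conditional to C; concretely, for λ-almost every x ∈ [0,1] and every y ∈ [0,1], ∫_{[0,y]} k_n(x,s) dλ(s) → ∫_{[0,y]} k(x,s) dλ(s), i.e. the Markov kernels K_{C_n}(x,·) given by K_{C_n}(x,[0,y]) = ∫_{[0,y]} k_n(x,s) dλ(s) converge weakly to K_C(x,·) for λ-almost every x. -/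
open MeasureTheory Filter Set
open scoped ENNReal

noncomputable section

/-- `C` is a bivariate copula (all conditions imposed on the unit square `[0,1]²`). -/
def IsCopula (C : ℝ → ℝ → ℝ) : Prop :=
  (∀ x ∈ Set.Icc (0:ℝ) 1, C x 0 = 0 ∧ C 0 x = 0 ∧ C x 1 = x ∧ C 1 x = x) ∧
    ∀ x₁ ∈ Set.Icc (0:ℝ) 1, ∀ x₂ ∈ Set.Icc (0:ℝ) 1, ∀ y₁ ∈ Set.Icc (0:ℝ) 1,
      ∀ y₂ ∈ Set.Icc (0:ℝ) 1, x₁ ≤ x₂ → y₁ ≤ y₂ →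
        0 ≤ C x₂ y₂ - C x₂ y₁ - C x₁ y₂ + C x₁ y₁

/-- `K` (as conditional distribution function `(x,y) ↦ K(x,[0,y])`) is a Markov kernel of
the copula `C`, i.e. a regular conditional distribution of the second coordinate given the
first under `μ_C`: for each `x ∈ [0,1]`, `K x` is the distribution function of a
probability measure on `[0,1]`, `x ↦ K x y` is measurable, and the disintegration identity
`∫_{[0,a]} K(t,[0,y]) dλ(t) = μ_C([0,a] × [0,y]) = C(a,y)` holds. -/
structure IsMarkovKernelOf (C : ℝ → ℝ → ℝ) (K : ℝ → ℝ → ℝ) : Prop where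
  meas : ∀ y ∈ Set.Icc (0:ℝ) 1, Measurable fun x => K x y
  mono : ∀ x ∈ Set.Icc (0:ℝ) 1, MonotoneOn (K x) (Set.Icc (0:ℝ) 1)
  nonneg : ∀ x ∈ Set.Icc (0:ℝ) 1, ∀ y ∈ Set.Icc (0:ℝ) 1, 0 ≤ K x y
  apply_one : ∀ x ∈ Set.Icc (0:ℝ) 1, K x 1 = 1
  disint : ∀ a ∈ Set.Icc (0:ℝ) 1, ∀ y ∈ Set.Icc (0:ℝ) 1,
    ∫ t in Set.Icc (0:ℝ) a, K t y = C a y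

/-! ### Auxiliary lemmas -/


lemma aux_inter (a : ℝ) : Icc (0:ℝ) 1 ∩ Iic a = Icc 0 (min 1 a) := by
  ext t; simp [le_min_iff, and_assoc]

/-- A nonnegative integrable function on `[0,1]` whose primitive is the identity equals `1`
almost everywhere. -/
lemma aux_ae_one (f : ℝ → ℝ → ℝ) (hmeas : Measurable (Function.uncurry f))
    (hnn : ∀ x y, 0 ≤ f x y)
    (hint : Integrable (Function.uncurry f)
      ((volume.restrict (Icc (0:ℝ) 1)).prod (volume.restrict (Icc (0:ℝ) 1))))
    (hF : ∀ a ∈ Icc (0:ℝ) 1, (∫ t in Icc (0:ℝ) a, (∫ s in Icc (0:ℝ) 1, f t s)) = a) :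
    ∀ᵐ x ∂(volume.restrict (Icc (0:ℝ) 1)), (∫ s in Icc (0:ℝ) 1, f x s) = 1 := by
  set μ := volume.restrict (Icc (0:ℝ) 1) with hμ
  set g : ℝ → ℝ := fun t => ∫ s in Icc (0:ℝ) 1, f t s with hg
  have hg_nn : ∀ t, 0 ≤ g t := fun t => integral_nonneg fun s => hnn t s
  have hg_meas : Measurable g :=
    (hmeas.stronglyMeasurable.integral_prod_right').measurable
  have hg_int : Integrable g μ := hint.integral_prod_left
  have hg_int' : ∀ c ∈ Icc (0:ℝ) 1, IntegrableOn g (Icc 0 c) volume := by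
    intro c hc
    have : IntegrableOn g (Icc 0 1) volume := by
      simpa [IntegrableOn] using hg_int
    exact this.mono_set (Icc_subset_Icc le_rfl hc.2)
  set ρ : Measure ℝ := μ.withDensity (fun t => ENNReal.ofReal (g t)) with hρ
  have hρ_univ : ρ univ = 1 := by
    rw [hρ, withDensity_apply _ MeasurableSet.univ, Measure.restrict_univ,
      ← ofReal_integral_eq_lintegral_ofReal hg_int (Eventually.of_forall hg_nn)]
    have : (∫ t, g t ∂μ) = 1 := by
      simpa using hF 1 (by norm_num)
    rw [this]; norm_num
  haveI : IsFiniteMeasure ρ := ⟨by rw [hρ_univ]; exact ENNReal.one_lt_top⟩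
  have hρμ : ρ = μ := by
    refine Measure.ext_of_Iic ρ μ fun a => ?_
    have hrr : μ.restrict (Iic a) = volume.restrict (Icc 0 (min 1 a)) := by
      rw [hμ, Measure.restrict_restrict measurableSet_Iic, Set.inter_comm, aux_inter]
    rw [hρ, withDensity_apply _ measurableSet_Iic, hrr, hμ,
      Measure.restrict_apply measurableSet_Iic, Set.inter_comm, aux_inter]
    rcases le_or_gt 0 a with h0 | h0
    · have hmem : min 1 a ∈ Icc (0:ℝ) 1 := ⟨le_min zero_le_one h0, min_le_left _ _⟩
      rw [← ofReal_integral_eq_lintegral_ofReal (hg_int' _ hmem)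
        (Eventually.of_forall hg_nn), hF _ hmem, Real.volume_Icc, sub_zero]
    · have : Icc (0:ℝ) (min 1 a) = ∅ := by
        rw [Icc_eq_empty_iff]
        intro h; exact absurd (le_trans h (min_le_right _ _)) (not_le.2 h0)
      simp [this]
  have h1 : (fun t => ENNReal.ofReal (g t)) =ᵐ[μ] (fun _ => (1 : ℝ≥0∞)) := by
    rw [← withDensity_eq_iff_of_sigmaFinite hg_meas.ennreal_ofReal.aemeasurable
      aemeasurable_const, ← hρ, hρμ]
    simp
  filter_upwards [h1] with t ht
  exact ENNReal.ofReal_eq_one.1 ht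

lemma aux_abs_eq (a b : ℝ) (_ : 0 ≤ a) (_ : 0 ≤ b) : |a - b| = a + b - 2 * min a b := by
  rcases le_total a b with h | h
  · rw [abs_of_nonpos (by linarith), min_eq_left h]; ring
  · rw [abs_of_nonneg (by linarith), min_eq_right h]; ring

/-- Scheffé-type lemma on `[0,1]`: a.e. convergence of nonnegative functions with constant
integral `1` implies `L¹`-convergence. -/
lemma aux_scheffe {fn : ℕ → ℝ → ℝ} {f : ℝ → ℝ}
    (hfn_meas : ∀ n, Measurable (fn n)) (hf_meas : Measurable f)
    (hfn_nn : ∀ n s, 0 ≤ fn n s) (hf_nn : ∀ s, 0 ≤ f s)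
    (hfn_int : ∀ n, IntegrableOn (fn n) (Icc (0:ℝ) 1))
    (hf_int : IntegrableOn f (Icc (0:ℝ) 1))
    (hfn_one : ∀ n, (∫ s in Icc (0:ℝ) 1, fn n s) = 1)
    (hf_one : (∫ s in Icc (0:ℝ) 1, f s) = 1)
    (htend : ∀ᵐ s ∂(volume.restrict (Icc (0:ℝ) 1)),
      Tendsto (fun n => fn n s) atTop (nhds (f s))) :
    Tendsto (fun n => ∫ s in Icc (0:ℝ) 1, |fn n s - f s|) atTop (nhds 0) := by
  set μ := volume.restrict (Icc (0:ℝ) 1) with hμ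
  set gm : ℕ → ℝ → ℝ := fun n s => min (fn n s) (f s) with hgm
  have hgm_int : ∀ n, Integrable (gm n) μ := by
    intro n
    refine Integrable.mono hf_int ((hfn_meas n).min hf_meas).aestronglyMeasurable
      (Eventually.of_forall fun s => ?_)
    rw [Real.norm_eq_abs, Real.norm_eq_abs, abs_of_nonneg (le_min (hfn_nn n s) (hf_nn s)),
      abs_of_nonneg (hf_nn s)]
    exact min_le_right _ _
  have hgmt : Tendsto (fun n => ∫ s, gm n s ∂μ) atTop (nhds (∫ s, f s ∂μ)) := by
    refine tendsto_integral_of_dominated_convergence f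
      (fun n => ((hfn_meas n).min hf_meas).aestronglyMeasurable) hf_int
      (fun n => Eventually.of_forall fun s => ?_) ?_
    · rw [Real.norm_eq_abs, abs_of_nonneg (le_min (hfn_nn n s) (hf_nn s))]
      exact min_le_right _ _
    · filter_upwards [htend] with s hs
      simpa [hgm] using hs.min (tendsto_const_nhds (x := f s))
  have hkey : ∀ n, (∫ s in Icc (0:ℝ) 1, |fn n s - f s|) = 2 - 2 * ∫ s, gm n s ∂μ := by
    intro n
    have h1 : (∫ s in Icc (0:ℝ) 1, |fn n s - f s|)
        = ∫ s, (fn n s + f s - 2 * gm n s) ∂μ := by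
      refine integral_congr_ae (Eventually.of_forall fun s => ?_)
      exact aux_abs_eq _ _ (hfn_nn n s) (hf_nn s)
    have hadd : Integrable (fun s => fn n s + f s) μ := (hfn_int n).add hf_int
    have hmul : Integrable (fun s => 2 * gm n s) μ := (hgm_int n).const_mul 2
    rw [h1, integral_sub hadd hmul, integral_add (hfn_int n) hf_int,
      MeasureTheory.integral_const_mul]
    have := hfn_one n
    have := hf_one
    rw [hμ] at *
    simp only [hgm]
    linarith
  simp only [hμ, hkey]
  have h3 : Tendsto (fun n => 2 - 2 * ∫ s, gm n s ∂μ) atTop (nhds (2 - 2 * ∫ s, f s ∂μ)) :=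
    tendsto_const_nhds.sub (hgmt.const_mul 2)
  have h2 : (2:ℝ) - 2 * ∫ s, f s ∂μ = 0 := by rw [hμ] at *; rw [hf_one]; ring
  rwa [h2] at h3

/-- The density of an absolutely continuous copula is integrable on the unit square. -/
lemma aux_int (C : ℝ → ℝ → ℝ) (k : ℝ → ℝ → ℝ)
    (hC : ∀ x ∈ Set.Icc (0:ℝ) 1, C x 0 = 0 ∧ C 0 x = 0 ∧ C x 1 = x ∧ C 1 x = x)
    (hdens : ∀ x ∈ Set.Icc (0:ℝ) 1, ∀ y ∈ Set.Icc (0:ℝ) 1,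
      C x y = ∫ p in Set.Icc (0:ℝ) x ×ˢ Set.Icc (0:ℝ) y, k p.1 p.2) :
    IntegrableOn (fun p : ℝ × ℝ => k p.1 p.2) (Icc (0:ℝ) 1 ×ˢ Icc (0:ℝ) 1) volume := by
  have h01 : (1:ℝ) ∈ Icc (0:ℝ) 1 := by norm_num
  have hC1 : C 1 1 = 1 := (hC 1 h01).2.2.1
  have h := hdens 1 h01 1 h01
  rw [hC1] at h
  by_contra hno
  rw [integral_undef hno] at h
  norm_num at h

/-- The marginal disintegration identity for an absolutely continuous copula:
`∫_{[0,a]} (∫_{[0,1]} k(t,s) ds) dt = a`. -/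
lemma aux_F (C : ℝ → ℝ → ℝ) (k : ℝ → ℝ → ℝ)
    (hC : ∀ x ∈ Set.Icc (0:ℝ) 1, C x 0 = 0 ∧ C 0 x = 0 ∧ C x 1 = x ∧ C 1 x = x)
    (hdens : ∀ x ∈ Set.Icc (0:ℝ) 1, ∀ y ∈ Set.Icc (0:ℝ) 1,
      C x y = ∫ p in Set.Icc (0:ℝ) x ×ˢ Set.Icc (0:ℝ) y, k p.1 p.2)
    (hint : IntegrableOn (fun p : ℝ × ℝ => k p.1 p.2) (Icc (0:ℝ) 1 ×ˢ Icc (0:ℝ) 1) volume) :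
    ∀ a ∈ Icc (0:ℝ) 1, (∫ t in Icc (0:ℝ) a, (∫ s in Icc (0:ℝ) 1, k t s)) = a := by
  intro a ha
  have hsub : Icc (0:ℝ) a ⊆ Icc 0 1 := Icc_subset_Icc le_rfl ha.2
  have hint2 : IntegrableOn (fun p : ℝ × ℝ => k p.1 p.2) (Icc (0:ℝ) a ×ˢ Icc (0:ℝ) 1)
      ((volume : Measure ℝ).prod volume) := by
    rw [← Measure.volume_eq_prod]
    exact hint.mono_set (Set.prod_mono hsub le_rfl)
  have h := hdens a ha 1 (by norm_num)
  have hCa : C a 1 = a := (hC a ha).2.2.1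
  rw [hCa, Measure.volume_eq_prod, setIntegral_prod _ hint2] at h
  exact h.symm

/-- Let `C, C₁, C₂, …` be absolutely continuous bivariate copulas with
densities `k, k₁, k₂, …` w.r.t. two-dimensional Lebesgue measure on `[0,1]²`, and suppose
`k_n → k` λ₂-almost everywhere. Then `(C_n)` converges weakly conditional to `C`:
for λ-a.e. `x ∈ [0,1]` and every `y ∈ [0,1]`,
`K_{C_n}(x,[0,y]) = ∫_{[0,y]} k_n(x,s) dλ(s) → ∫_{[0,y]} k(x,s) dλ(s) = K_C(x,[0,y])`. -/
theorem stmt19 (C : ℝ → ℝ → ℝ) (Cseq : ℕ → ℝ → ℝ → ℝ)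
    (k : ℝ → ℝ → ℝ) (kseq : ℕ → ℝ → ℝ → ℝ)
    (hC : IsCopula C) (hCseq : ∀ n, IsCopula (Cseq n))
    (hk_meas : Measurable (Function.uncurry k))
    (hkseq_meas : ∀ n, Measurable (Function.uncurry (kseq n)))
    (hk_nonneg : ∀ x y, 0 ≤ k x y)
    (hkseq_nonneg : ∀ n x y, 0 ≤ kseq n x y)
    (hdens : ∀ x ∈ Set.Icc (0:ℝ) 1, ∀ y ∈ Set.Icc (0:ℝ) 1,
      C x y = ∫ p in Set.Icc (0:ℝ) x ×ˢ Set.Icc (0:ℝ) y, k p.1 p.2)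
    (hdensseq : ∀ n, ∀ x ∈ Set.Icc (0:ℝ) 1, ∀ y ∈ Set.Icc (0:ℝ) 1,
      Cseq n x y = ∫ p in Set.Icc (0:ℝ) x ×ˢ Set.Icc (0:ℝ) y, kseq n p.1 p.2)
    (hae : ∀ᵐ p ∂(volume.restrict (Set.Icc (0:ℝ) 1 ×ˢ Set.Icc (0:ℝ) 1)),
      Filter.Tendsto (fun n => kseq n (p : ℝ × ℝ).1 p.2) Filter.atTop
        (nhds (k (p : ℝ × ℝ).1 p.2))) :
    (∀ᵐ x ∂(volume.restrict (Set.Icc (0:ℝ) 1)), ∀ y ∈ Set.Icc (0:ℝ) 1,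
      Filter.Tendsto (fun n => ∫ s in Set.Icc (0:ℝ) y, kseq n x s) Filter.atTop
        (nhds (∫ s in Set.Icc (0:ℝ) y, k x s))) ∧
    WeakCondConv (fun n x y => ∫ s in Set.Icc (0:ℝ) y, kseq n x s)
      (fun x y => ∫ s in Set.Icc (0:ℝ) y, k x s) := by
  set μ := volume.restrict (Set.Icc (0:ℝ) 1) with hμ
  have main : ∀ᵐ x ∂μ, ∀ y ∈ Set.Icc (0:ℝ) 1,
      Filter.Tendsto (fun n => ∫ s in Set.Icc (0:ℝ) y, kseq n x s) Filter.atTop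
        (nhds (∫ s in Set.Icc (0:ℝ) y, k x s)) := by
    have hintk : IntegrableOn (fun p : ℝ × ℝ => k p.1 p.2)
        (Icc (0:ℝ) 1 ×ˢ Icc (0:ℝ) 1) volume := aux_int C k hC.1 hdens
    have hintkseq : ∀ n, IntegrableOn (fun p : ℝ × ℝ => kseq n p.1 p.2)
        (Icc (0:ℝ) 1 ×ˢ Icc (0:ℝ) 1) volume :=
      fun n => aux_int (Cseq n) (kseq n) (hCseq n).1 (hdensseq n)
    have hPk : Integrable (Function.uncurry k) (μ.prod μ) := by
      rw [hμ, Measure.prod_restrict, ← Measure.volume_eq_prod]; exact hintk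
    have hPkseq : ∀ n, Integrable (Function.uncurry (kseq n)) (μ.prod μ) := by
      intro n
      rw [hμ, Measure.prod_restrict, ← Measure.volume_eq_prod]; exact hintkseq n
    have honek : ∀ᵐ x ∂μ, (∫ s in Icc (0:ℝ) 1, k x s) = 1 :=
      aux_ae_one k hk_meas hk_nonneg hPk (aux_F C k hC.1 hdens hintk)
    have honekseq : ∀ n, ∀ᵐ x ∂μ, (∫ s in Icc (0:ℝ) 1, kseq n x s) = 1 :=
      fun n => aux_ae_one (kseq n) (hkseq_meas n) (hkseq_nonneg n) (hPkseq n)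
        (aux_F (Cseq n) (kseq n) (hCseq n).1 (hdensseq n) (hintkseq n))
    have hslice : ∀ᵐ x ∂μ, IntegrableOn (k x) (Icc (0:ℝ) 1) volume := by
      filter_upwards [hPk.prod_right_ae] with x hx
      exact hx
    have hsliceseq : ∀ n, ∀ᵐ x ∂μ, IntegrableOn (kseq n x) (Icc (0:ℝ) 1) volume := by
      intro n
      filter_upwards [(hPkseq n).prod_right_ae] with x hx
      exact hx
    have haeslice : ∀ᵐ x ∂μ, ∀ᵐ s ∂μ,
        Tendsto (fun n => kseq n x s) atTop (nhds (k x s)) := by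
      have h := hae
      rw [show volume.restrict (Set.Icc (0:ℝ) 1 ×ˢ Set.Icc (0:ℝ) 1) = μ.prod μ by
        rw [hμ, Measure.volume_eq_prod, Measure.prod_restrict]] at h
      exact Measure.ae_ae_of_ae_prod h
    filter_upwards [honek, ae_all_iff.2 honekseq, hslice, ae_all_iff.2 hsliceseq, haeslice]
      with x h1 h2 h3 h4 h5
    have hS := aux_scheffe (fn := fun n => kseq n x) (f := k x)
      (fun n => (hkseq_meas n).of_uncurry_left) hk_meas.of_uncurry_left
      (fun n s => hkseq_nonneg n x s) (fun s => hk_nonneg x s) h4 h3 h2 h1 h5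
    intro y hy
    have hsub : Icc (0:ℝ) y ⊆ Icc 0 1 := Icc_subset_Icc le_rfl hy.2
    have hb : ∀ n, |(∫ s in Icc (0:ℝ) y, kseq n x s) - ∫ s in Icc (0:ℝ) y, k x s|
        ≤ ∫ s in Icc (0:ℝ) 1, |kseq n x s - k x s| := by
      intro n
      rw [← integral_sub ((h4 n).mono_set hsub) (h3.mono_set hsub)]
      calc |∫ s in Icc (0:ℝ) y, (kseq n x s - k x s)|
          ≤ ∫ s in Icc (0:ℝ) y, |kseq n x s - k x s| := by
            simpa [Real.norm_eq_abs] using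
              norm_integral_le_integral_norm (μ := volume.restrict (Icc (0:ℝ) y))
                (fun s => kseq n x s - k x s)
        _ ≤ ∫ s in Icc (0:ℝ) 1, |kseq n x s - k x s| := by
            refine setIntegral_mono_set (((h4 n).sub h3).abs)
              (Eventually.of_forall fun s => abs_nonneg _)
              (HasSubset.Subset.eventuallyLE hsub)
    have h0 := squeeze_zero (fun n => abs_nonneg _) hb hS
    rw [tendsto_iff_dist_tendsto_zero]
    simpa [Real.dist_eq] using h0
  exact ⟨main, by filter_upwards [main] with x hx y hy _; exact hx y hy⟩
end
end
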